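/- For every integer q ≥ 0, Z(q,0,−1) = {(c,a) ∈ ℂ² : 12a³ − c³ − 6c = 0}; and for every m ≥ 1 and q ≥ 0, the set Z(q,m,−1) is finite. In particular, Z(q,m,−1) is infinite if and only if m = 0. -/

import Mathlib

/-- The cubic polynomial `P_{c,a}(z) = z³/3 − (c/2)z² + a³`. -/
noncomputable def P (c a z : ℂ) : ℂ := z ^ 3 / 3 - c / 2 * z ^ 2 + a ^ 3

/-- `Z(q,m,ζ)` is the set of `(c,a) ∈ ℂ²` such that
`Q_{c,a}(z) = ζ P_{c,a}^m(z) + (1−ζ)c/2` commutes with `P_{c,a}^k` for every `k ≥ 1`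
with `ζ^{3^k} = ζ`, and `Q_{c,a}(P_{c,a}^q(c₀)) = P_{c,a}^q(c₁)` or
`Q_{c,a}(P_{c,a}^q(c₁)) = P_{c,a}^q(c₀)` (with `c₀ = 0`, `c₁ = c`). -/
def Zset (q m : ℕ) (ζ : ℂ) : Set (ℂ × ℂ) :=
  {p : ℂ × ℂ |
    (∀ k : ℕ, 1 ≤ k → ζ ^ (3 ^ k) = ζ → ∀ z : ℂ,
      ζ * (P p.1 p.2)^[m] ((P p.1 p.2)^[k] z) + (1 - ζ) * p.1 / 2 =
        (P p.1 p.2)^[k] (ζ * (P p.1 p.2)^[m] z + (1 - ζ) * p.1 / 2)) ∧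
    (ζ * (P p.1 p.2)^[m] ((P p.1 p.2)^[q] 0) + (1 - ζ) * p.1 / 2 = (P p.1 p.2)^[q] p.1 ∨
     ζ * (P p.1 p.2)^[m] ((P p.1 p.2)^[q] p.1) + (1 - ζ) * p.1 / 2 = (P p.1 p.2)^[q] 0)}

open Polynomial

lemma P_sym (c a z : ℂ) : P c a (c - z) = -(P c a z) + 2*a^3 - c^3/6 := by
  unfold P; ring

lemma sym_comm {c a : ℂ} (h : 12*a^3 - c^3 - 6*c = 0) (z : ℂ) :
    P c a (c - z) = c - P c a z := by
  rw [P_sym]; linear_combination h/6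

lemma iter_sym {c a : ℂ} (h : 12*a^3 - c^3 - 6*c = 0) (n : ℕ) (z : ℂ) :
    (P c a)^[n] (c - z) = c - (P c a)^[n] z := by
  induction n generalizing z with
  | zero => simp
  | succ n ih => rw [Function.iterate_succ_apply, Function.iterate_succ_apply, sym_comm h, ih]

lemma neg_simp (c x : ℂ) : -1 * x + (1 - (-1)) * c / 2 = c - x := by ring

lemma comm_part {c a : ℂ} (h : 12*a^3 - c^3 - 6*c = 0) (m k : ℕ) (z : ℂ) :
    -1 * (P c a)^[m] ((P c a)^[k] z) + (1 - (-1)) * c / 2 =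
      (P c a)^[k] (-1 * (P c a)^[m] z + (1 - (-1)) * c / 2) := by
  rw [neg_simp, neg_simp, iter_sym h, ← Function.iterate_add_apply,
    ← Function.iterate_add_apply, Nat.add_comm]

/-- Membership in `Z(q,m,-1)` implies the curve equation, for any `m`. -/
lemma mem_curve {q m : ℕ} {c a : ℂ} (hp : (c, a) ∈ Zset q m (-1)) :
    12*a^3 - c^3 - 6*c = 0 := by
  have hc := hp.1 1 le_rfl (by norm_num) 0
  simp only [Function.iterate_one] at hc
  rw [neg_simp, neg_simp, ← Function.iterate_succ_apply, Function.iterate_succ_apply',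
    P_sym] at hc
  linear_combination -6*hc

lemma mem_iterate {q m : ℕ} {c a : ℂ} (hp : (c, a) ∈ Zset q m (-1)) :
    (P c a)^[m + q] 0 = (P c a)^[q] 0 := by
  have h := mem_curve hp
  have hq : (P c a)^[q] c = c - (P c a)^[q] 0 := by
    have := iter_sym h q 0; simpa using this
  rcases hp.2 with h2 | h2 <;> rw [neg_simp] at h2
  · rw [← Function.iterate_add_apply, hq] at h2
    linear_combination -h2
  · rw [hq, iter_sym h, ← Function.iterate_add_apply] at h2
    linear_combination h2

lemma mem_of_curve_m (q m : ℕ) {c a : ℂ} (h : 12*a^3 - c^3 - 6*c = 0)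
    (hit : (P c a)^[m + q] 0 = (P c a)^[q] 0) : (c, a) ∈ Zset q m (-1) := by
  refine ⟨fun k _ _ z => comm_part h m k z, Or.inl ?_⟩
  rw [neg_simp, ← Function.iterate_add_apply, hit,
    show (P c a)^[q] c = c - (P c a)^[q] 0 by
      have := iter_sym h q 0; simpa using this]

lemma Zzero (q : ℕ) : Zset q 0 (-1) = {p : ℂ × ℂ | 12 * p.2 ^ 3 - p.1 ^ 3 - 6 * p.1 = 0} := by
  ext ⟨c, a⟩
  constructor
  · exact fun hp => mem_curve hp
  · intro h
    exact mem_of_curve_m q 0 h (by rw [Nat.zero_add])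

/-- `Fp` is the polynomial (in the variable `c`) analogue of `P c a`, where `a^3` is
replaced by `(c^3+6c)/12` using the curve equation. -/
noncomputable def Fp (t : Polynomial ℂ) : Polynomial ℂ :=
  C (1/3) * t^3 - C (1/2) * X * t^2 + (C (1/12) * X^3 + C (1/2) * X)

noncomputable def g (n : ℕ) : Polynomial ℂ := Fp^[n] 0

lemma g_eval {c a : ℂ} (h : 12*a^3 - c^3 - 6*c = 0) (n : ℕ) :
    (g n).eval c = (P c a)^[n] 0 := by
  induction n with
  | zero => simp [g]
  | succ n ih =>
    have h1 : g (n+1) = Fp (g n) := Function.iterate_succ_apply' Fp n 0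
    rw [h1, Function.iterate_succ_apply']
    rw [show Fp (g n) = C (1/3) * (g n)^3 - C (1/2) * X * (g n)^2
        + (C (1/12) * X^3 + C (1/2) * X) from rfl]
    simp only [eval_add, eval_sub, eval_mul, eval_pow, eval_C, eval_X, ih]
    unfold P
    linear_combination -h/12

lemma nsmul_cast (x : ℕ) : (3 : ℕ) • ((x : WithBot ℕ)) = ((3*x : ℕ) : WithBot ℕ) := by
  rw [succ_nsmul, two_nsmul, ← Nat.cast_add, ← Nat.cast_add]
  norm_num; ring

lemma g_deg (n : ℕ) (hn : 1 ≤ n) : (g n).degree = ((3^n : ℕ) : WithBot ℕ) := by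
  induction n with
  | zero => omega
  | succ n ih =>
    rcases Nat.eq_zero_or_pos n with rfl | hn'
    · have h1 : g 1 = C (1/12 : ℂ) * X^3 + C (1/2) * X := by simp [g, Fp]
      rw [h1]
      compute_degree!
    · have ihn := ih hn'
      have h1 : g (n+1) = Fp (g n) := Function.iterate_succ_apply' Fp n 0
      have hd1 : (C (1/3 : ℂ) * (g n)^3).degree = ((3^(n+1) : ℕ) : WithBot ℕ) := by
        rw [degree_mul, degree_pow, ihn, degree_C (by norm_num), zero_add, nsmul_cast]
        norm_num; ring_nf
      have hd2 : (C (1/2 : ℂ) * X * (g n)^2).degree = ((2*3^n + 1 : ℕ) : WithBot ℕ) := by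
        rw [degree_mul, degree_mul, degree_pow, ihn, degree_C (by norm_num), degree_X,
          zero_add, two_nsmul, ← Nat.cast_add]
        rw [show ((1 : WithBot ℕ)) = ((1:ℕ) : WithBot ℕ) from rfl, ← Nat.cast_add]
        norm_num; ring
      have hlt1 : (C (1/2 : ℂ) * X * (g n)^2).degree < (C (1/3 : ℂ) * (g n)^3).degree := by
        rw [hd1, hd2, Nat.cast_lt]
        have : 1 < 3^n := Nat.one_lt_pow (by omega) (by norm_num)
        calc 2*3^n + 1 < 2*3^n + 3^n := by omega
        _ = 3^(n+1) := by ring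
      have hd3 : (C (1/3 : ℂ) * (g n)^3 - C (1/2 : ℂ) * X * (g n)^2).degree
          = ((3^(n+1) : ℕ) : WithBot ℕ) := by
        rw [degree_sub_eq_left_of_degree_lt hlt1, hd1]
      have hlt2 : (C (1/12 : ℂ) * X^3 + C (1/2) * X).degree
          < (C (1/3 : ℂ) * (g n)^3 - C (1/2 : ℂ) * X * (g n)^2).degree := by
        have hdA : (C (1/12 : ℂ) * X^3 + C (1/2) * X).degree = ((3:ℕ) : WithBot ℕ) := by
          compute_degree!
        rw [hd3, hdA, Nat.cast_lt]
        calc 3 = 3^1 := by norm_num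
        _ < 3^(n+1) := Nat.pow_lt_pow_right (by norm_num) (by omega)
      rw [h1, show Fp (g n) = C (1/3) * (g n)^3 - C (1/2) * X * (g n)^2
        + (C (1/12) * X^3 + C (1/2) * X) from rfl,
        degree_add_eq_left_of_degree_lt hlt2, hd3]

lemma cube_fiber_finite (v : ℂ) : {a : ℂ | a^3 = v}.Finite := by
  have hne : (X^3 - C v : Polynomial ℂ) ≠ 0 := (monic_X_pow_sub_C v (by norm_num)).ne_zero
  refine (Polynomial.finite_setOf_isRoot hne).subset ?_
  intro a ha
  simp only [Set.mem_setOf_eq] at ha ⊢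
  simp [IsRoot, ha]

lemma Zfin (q m : ℕ) (hm : 1 ≤ m) : (Zset q m (-1)).Finite := by
  have hlt : (g q).degree < (g (m+q)).degree := by
    rcases Nat.eq_zero_or_pos q with rfl | hq
    · rw [show g 0 = 0 by simp [g], degree_zero, g_deg (m+0) (by omega)]
      exact WithBot.bot_lt_coe _
    · rw [g_deg q hq, g_deg (m+q) (by omega), Nat.cast_lt]
      exact Nat.pow_lt_pow_right (by norm_num) (by omega)
  have hd : (g (m+q) - g q).degree = (g (m+q)).degree :=
    degree_sub_eq_left_of_degree_lt hlt
  have hne : g (m+q) - g q ≠ 0 := by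
    intro h0
    rw [h0, degree_zero, g_deg (m+q) (by omega)] at hd
    exact WithBot.coe_ne_bot hd.symm
  apply Set.Finite.subset (Set.Finite.biUnion (Polynomial.finite_setOf_isRoot hne)
    (fun x _ => (Set.finite_singleton x).prod (cube_fiber_finite ((x^3+6*x)/12))))
  rintro ⟨c, a⟩ hp
  have hcurve := mem_curve hp
  have hit := mem_iterate hp
  have hroot : c ∈ {x : ℂ | (g (m+q) - g q).IsRoot x} := by
    simp only [Set.mem_setOf_eq, IsRoot, eval_sub, g_eval hcurve, hit, sub_self]
  refine Set.mem_biUnion hroot ?_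
  refine ⟨rfl, ?_⟩
  show a^3 = (c^3 + 6*c)/12
  linear_combination hcurve/12

lemma curve_infinite : {p : ℂ × ℂ | 12 * p.2 ^ 3 - p.1 ^ 3 - 6 * p.1 = 0}.Infinite := by
  have hex : ∀ c : ℂ, ∃ a : ℂ, a ^ 3 = (c^3 + 6*c)/12 :=
    fun c => IsAlgClosed.exists_pow_nat_eq _ (by norm_num)
  choose f hf using hex
  apply Set.infinite_of_injective_forall_mem (f := fun c : ℂ => (c, f c))
  · exact fun x y hxy => congrArg Prod.fst hxy
  · intro c
    simp only [Set.mem_setOf_eq]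
    rw [hf c]
    field_simp
    ring

/-- `Z(q,0,−1)` is the curve `{12a³ − c³ − 6c = 0}` for every `q ≥ 0`, `Z(q,m,−1)` is
finite for every `m ≥ 1`, and `Z(q,m,−1)` is infinite iff `m = 0`. -/
theorem stmt16 :
    (∀ q : ℕ, Zset q 0 (-1) = {p : ℂ × ℂ | 12 * p.2 ^ 3 - p.1 ^ 3 - 6 * p.1 = 0}) ∧
    (∀ q m : ℕ, 1 ≤ m → (Zset q m (-1)).Finite) ∧
    (∀ q m : ℕ, (Zset q m (-1)).Infinite ↔ m = 0) := by
  refine ⟨Zzero, Zfin, fun q m => ?_⟩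
  constructor
  · intro hinf
    by_contra hm
    exact (Set.not_infinite.mpr (Zfin q m (by omega))) hinf
  · rintro rfl
    rw [Zzero]
    exact curve_infinite
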